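/- For all integers n ≥ r ≥ 2, every family F of subsets of [n] that does not have property U(r+1, 2) satisfies |F| ≤ (n/r + 1)^r (where the right-hand side is a real power). Consequently, every family F of subsets of [n] satisfies |F| ≤ (n/un_2(F) + 1)^{un_2(F)}, where un_2(F) is the size of the largest 2-universal set for F. -/

import Mathlib

/-- `F` shatters `I` : the trace of `F` on `I` has full size `2^|I|`. -/
def Shatters {n : ℕ} (F : Finset (Finset (Fin n))) (I : Finset (Fin n)) : Prop :=
  (F.image fun A => A ∩ I).card = 2 ^ I.card

/-- `I` is `d`-universal for `F`. -/
def DUniversal {n : ℕ} (F : Finset (Finset (Fin n))) (d : ℕ) (I : Finset (Fin n)) : Prop :=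
  d ≤ I.card ∧ ∀ J ⊆ I, J.card = d → Shatters F J

/-- `F` has property `U(r, d)` : there is a `d`-universal set of size `r`. -/
def HasU {n : ℕ} (F : Finset (Finset (Fin n))) (r d : ℕ) : Prop :=
  ∃ I : Finset (Fin n), I.card = r ∧ DUniversal F d I

/-! ### The balanced product function -/

/-- `gprod n r = ∏ (⌊(n+i)/r⌋ + 1)`, the number of cliques of the Turán graph. -/
def gprod (n r : ℕ) : ℕ := ∏ i ∈ Finset.range r, ((n + i) / r + 1)

lemma gprod_zero (r : ℕ) : gprod 0 r = 1 := by
  unfold gprod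
  apply Finset.prod_eq_one
  intro i hi
  rw [Finset.mem_range] at hi
  have := Nat.div_eq_of_lt (show 0 + i < r by omega)
  omega

lemma gprod_mono {n n' : ℕ} (r : ℕ) (h : n ≤ n') : gprod n r ≤ gprod n' r := by
  apply Finset.prod_le_prod'
  intro i _
  have := Nat.div_le_div_right (c := r) (Nat.add_le_add_right h i)
  omega

lemma div01 {a b : ℕ} (h : a < 2 * b) : a / b = if a < b then 0 else 1 := by
  split
  · exact Nat.div_eq_of_lt ‹_›
  · exact Nat.div_eq_of_lt_le (by omega) (by omega)

lemma div_shift {t : ℕ} (k i : ℕ) (hi : i < t) :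
    (k + 1 + i) / (t + 1) = (k - k / (t + 1) + i) / t := by
  obtain ⟨q, s, hs, hk⟩ : ∃ q s, s < t + 1 ∧ k = (t + 1) * q + s :=
    ⟨k / (t + 1), k % (t + 1), Nat.mod_lt _ (by omega), (Nat.div_add_mod k (t + 1)).symm⟩
  subst hk
  have hdiv : ((t + 1) * q + s) / (t + 1) = q := by
    rw [Nat.mul_add_div (by omega), Nat.div_eq_of_lt hs, Nat.add_zero]
  have hexp : (t + 1) * q = t * q + q := by ring
  have e1 : (t + 1) * q + s + 1 + i = (t + 1) * q + (s + 1 + i) := by ring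
  have e2 : (t + 1) * q + s - q + i = t * q + (s + i) := by omega
  rw [hdiv, e1, e2, Nat.mul_add_div (by omega), Nat.mul_add_div (by omega)]
  rw [div01 (a := s + 1 + i) (by omega), div01 (a := s + i) (by omega)]
  split <;> split <;> omega

lemma gprod_succ (k t : ℕ) :
    gprod (k + 1) (t + 1) = gprod k (t + 1) + gprod (k - k / (t + 1)) t := by
  unfold gprod
  rw [Finset.prod_range_succ (fun i => (k + 1 + i) / (t + 1) + 1) t,
    Finset.prod_range_succ' (fun i => (k + i) / (t + 1) + 1) t]
  have e3 : ∀ i ∈ Finset.range t, (k + (i + 1)) / (t + 1) + 1 = (k + 1 + i) / (t + 1) + 1 := by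
    intro i _; rw [show k + (i + 1) = k + 1 + i by omega]
  have e5 : ∀ i ∈ Finset.range t,
      (k - k / (t + 1) + i) / t + 1 = (k + 1 + i) / (t + 1) + 1 := by
    intro i hi; rw [div_shift k i (Finset.mem_range.mp hi)]
  rw [Finset.prod_congr rfl e3, Finset.prod_congr rfl e5]
  have e4 : (k + 1 + t) / (t + 1) = k / (t + 1) + 1 := by
    rw [show k + 1 + t = k + (t + 1) by ring, Nat.add_div_right _ (by omega)]
  rw [e4, Nat.add_zero]
  set P := ∏ x ∈ Finset.range t, ((k + 1 + x) / (t + 1) + 1) with hP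
  ring

lemma sum_div_parts (r : ℕ) (hr : 0 < r) : ∀ n, ∑ i ∈ Finset.range r, (n + i) / r = n := by
  intro n
  induction n with
  | zero =>
    apply Finset.sum_eq_zero
    intro i hi
    rw [Finset.mem_range] at hi
    rw [Nat.zero_add, Nat.div_eq_of_lt hi]
  | succ n ih =>
    have h1 : ∑ i ∈ Finset.range (r + 1), (n + i) / r
        = (∑ i ∈ Finset.range r, (n + (i + 1)) / r) + (n + 0) / r :=
      Finset.sum_range_succ' (fun i => (n + i) / r) r
    have h2 : ∑ i ∈ Finset.range (r + 1), (n + i) / r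
        = (∑ i ∈ Finset.range r, (n + i) / r) + (n + r) / r :=
      Finset.sum_range_succ (fun i => (n + i) / r) r
    have h3 : (n + r) / r = n / r + 1 := Nat.add_div_right n hr
    have h4 : ∀ i ∈ Finset.range r, (n + 1 + i) / r = (n + (i + 1)) / r := by
      intro i _; rw [show n + 1 + i = n + (i + 1) by omega]
    simp only [Nat.add_zero] at h1
    rw [Finset.sum_congr rfl h4]
    omega

/-! ### Counting cliques -/

section Cliques

variable {α : Type*} [DecidableEq α] (adj : α → α → Prop) [DecidableRel adj]

/-- The finset of all cliques (of any size, including `∅`) inside `V`. -/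
def cliqueSet (V : Finset α) : Finset (Finset α) :=
  V.powerset.filter (fun S => ∀ x ∈ S, ∀ y ∈ S, x ≠ y → adj x y)

lemma mem_cliqueSet {V S : Finset α} :
    S ∈ cliqueSet adj V ↔ S ⊆ V ∧ ∀ x ∈ S, ∀ y ∈ S, x ≠ y → adj x y := by
  simp [cliqueSet]

lemma cliqueSet_mono {V V' : Finset α} (h : V ⊆ V') : cliqueSet adj V ⊆ cliqueSet adj V' := by
  intro S hS
  rw [mem_cliqueSet] at *
  exact ⟨hS.1.trans h, hS.2⟩

lemma greedy (hsym : ∀ x y, adj x y → adj y x) (hirr : ∀ x, ¬ adj x x) :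
    ∀ (k t : ℕ) (V : Finset α),
      (∀ v ∈ V, (V.filter (fun u => ¬ adj v u)).card ≤ t) →
      k * t < V.card + t →
      ∃ S ∈ cliqueSet adj V, S.card = k := by
  intro k
  induction k with
  | zero =>
    intro t V h hlt
    exact ⟨∅, by simp [mem_cliqueSet], rfl⟩
  | succ k ih =>
    intro t V h hlt
    have hmul : (k + 1) * t = k * t + t := by ring
    have hVpos : 0 < V.card := by omega
    obtain ⟨v, hv⟩ := Finset.card_pos.mp hVpos
    set W := V.filter (fun u => adj v u) with hW
    have hWcard : W.card + (V.filter (fun u => ¬ adj v u)).card = V.card :=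
      Finset.card_filter_add_card_filter_not (p := fun u => adj v u)
    have hWV : W ⊆ V := Finset.filter_subset _ _
    have hhyp : ∀ u ∈ W, (W.filter (fun w => ¬ adj u w)).card ≤ t := by
      intro u hu
      calc (W.filter (fun w => ¬ adj u w)).card
          ≤ (V.filter (fun w => ¬ adj u w)).card :=
            Finset.card_le_card (Finset.filter_subset_filter _ hWV)
        _ ≤ t := h u (hWV hu)
    have hlt' : k * t < W.card + t := by
      have := h v hv
      omega
    obtain ⟨S, hS, hScard⟩ := ih t W hhyp hlt'
    rw [mem_cliqueSet] at hS
    have hvS : v ∉ S := by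
      intro hvS
      have := hS.1 hvS
      rw [hW, Finset.mem_filter] at this
      exact hirr v this.2
    refine ⟨insert v S, ?_, ?_⟩
    · rw [mem_cliqueSet]
      constructor
      · exact Finset.insert_subset hv (hS.1.trans hWV)
      · have hadjS : ∀ u ∈ S, adj v u := by
          intro u hu
          have := hS.1 hu
          rw [hW, Finset.mem_filter] at this
          exact this.2
        intro x hx y hy hxy
        rcases Finset.mem_insert.mp hx with hxv | hxS
        · rcases Finset.mem_insert.mp hy with hyv | hyS
          · exact absurd (hxv.trans hyv.symm) hxy
          · subst hxv; exact hadjS y hyS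
        · rcases Finset.mem_insert.mp hy with hyv | hyS
          · subst hyv; exact hsym _ _ (hadjS x hxS)
          · exact hS.2 x hxS y hyS hxy
    · rw [Finset.card_insert_of_notMem hvS, hScard]

lemma exists_small_nbhd (hsym : ∀ x y, adj x y → adj y x) (hirr : ∀ x, ¬ adj x x)
    (r : ℕ) (hr : 0 < r) (V : Finset α) (hV : 0 < V.card)
    (hfree : ∀ S ∈ cliqueSet adj V, S.card ≤ r) :
    ∃ v ∈ V, (V.filter (fun u => adj v u)).card + ((V.card - 1) / r + 1) ≤ V.card := by
  by_contra hcon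
  push_neg at hcon
  set t := (V.card - 1) / r with ht
  have h : ∀ v ∈ V, (V.filter (fun u => ¬ adj v u)).card ≤ t := by
    intro v hv
    have h1 : (V.filter (fun u => adj v u)).card + (V.filter (fun u => ¬ adj v u)).card = V.card :=
      Finset.card_filter_add_card_filter_not (p := fun u => adj v u)
    have h2 := hcon v hv
    omega
  have hrt : r * t ≤ V.card - 1 := by
    rw [ht, Nat.mul_comm]
    exact Nat.div_mul_le_self _ _
  have hlt : (r + 1) * t < V.card + t := by
    have : (r + 1) * t = r * t + t := by ring
    omega
  obtain ⟨S, hS, hScard⟩ := greedy adj hsym hirr (r + 1) t V h hlt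
  have := hfree S hS
  omega

lemma cliqueSet_card_le (hsym : ∀ x y, adj x y → adj y x) (hirr : ∀ x, ¬ adj x x) :
    ∀ (n r : ℕ) (V : Finset α), V.card = n →
      (∀ S ∈ cliqueSet adj V, S.card ≤ r) →
      (cliqueSet adj V).card ≤ gprod n r := by
  intro n
  induction n using Nat.strong_induction_on with
  | _ n ih =>
    intro r V hcard hfree
    match n, hcard with
    | 0, hcard =>
      have hV : V = ∅ := Finset.card_eq_zero.mp hcard
      subst hV
      have : cliqueSet adj (∅ : Finset α) = {∅} := by
        ext S
        simp [mem_cliqueSet, Finset.subset_empty]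
        intro h
        subst h
        simp
      rw [this, gprod_zero, Finset.card_singleton]
    | (n + 1), hcard =>
      match r with
      | 0 =>
        exfalso
        obtain ⟨v, hv⟩ := Finset.card_pos.mp (by omega : 0 < V.card)
        have : ({v} : Finset α) ∈ cliqueSet adj V := by
          rw [mem_cliqueSet]
          refine ⟨Finset.singleton_subset_iff.mpr hv, ?_⟩
          intro x hx y hy hxy
          rw [Finset.mem_singleton] at hx hy
          exact absurd (hx.trans hy.symm) hxy
        have := hfree _ this
        simp at this
      | (r + 1) =>
        obtain ⟨v, hv, hdeg⟩ :=
          exists_small_nbhd adj hsym hirr (r + 1) (by omega) V (by omega) hfree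
        rw [hcard] at hdeg
        simp only [Nat.add_sub_cancel] at hdeg
        -- split cliques by membership of v
        set N := (V.erase v).filter (fun u => adj v u) with hN
        have hsplit :
            ((cliqueSet adj V).filter (fun S => v ∈ S)).card +
              ((cliqueSet adj V).filter (fun S => ¬ v ∈ S)).card = (cliqueSet adj V).card :=
          Finset.card_filter_add_card_filter_not (p := fun S => v ∈ S)
        -- cliques not containing v
        have hA : (cliqueSet adj V).filter (fun S => ¬ v ∈ S) = cliqueSet adj (V.erase v) := by
          ext S
          simp only [Finset.mem_filter, mem_cliqueSet]
          constructor
          · rintro ⟨⟨h1, h2⟩, h3⟩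
            exact ⟨Finset.subset_erase.mpr ⟨h1, h3⟩, h2⟩
          · rintro ⟨h1, h2⟩
            have := Finset.subset_erase.mp h1
            exact ⟨⟨this.1, h2⟩, this.2⟩
        -- cliques containing v inject into cliques of N
        have hB : ((cliqueSet adj V).filter (fun S => v ∈ S)).card ≤ (cliqueSet adj N).card := by
          apply Finset.card_le_card_of_injOn (fun S => S.erase v)
          · intro S hS
            rw [Finset.mem_coe, Finset.mem_filter, mem_cliqueSet] at hS
            obtain ⟨⟨hSV, hcl⟩, hvS⟩ := hS
            rw [Finset.mem_coe, mem_cliqueSet]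
            constructor
            · intro x hx
              rw [Finset.mem_erase] at hx
              rw [hN, Finset.mem_filter, Finset.mem_erase]
              exact ⟨⟨hx.1, hSV hx.2⟩, hcl v hvS x hx.2 (Ne.symm hx.1)⟩
            · intro x hx y hy hxy
              rw [Finset.mem_erase] at hx hy
              exact hcl x hx.2 y hy.2 hxy
          · intro S1 h1 S2 h2 heq
            rw [Finset.mem_coe, Finset.mem_filter] at h1 h2
            have heq' : S1.erase v = S2.erase v := heq
            rw [← Finset.insert_erase h1.2, heq', Finset.insert_erase h2.2]
        -- N is small and (r)-clique-free
        have hNsub : N ⊆ V.filter (fun u => adj v u) := by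
          rw [hN]
          exact Finset.filter_subset_filter _ (Finset.erase_subset _ _)
        have hNcard : N.card ≤ n - n / (r + 1) := by
          have h6 := Finset.card_le_card hNsub
          generalize hq : n / (r + 1) = q at hdeg ⊢
          omega
        have hNfree : ∀ S ∈ cliqueSet adj N, S.card ≤ r := by
          intro S hS
          rw [mem_cliqueSet] at hS
          have hvS : v ∉ S := by
            intro hvS
            have := hS.1 hvS
            rw [hN, Finset.mem_filter, Finset.mem_erase] at this
            exact this.1.1 rfl
          have : insert v S ∈ cliqueSet adj V := by
            rw [mem_cliqueSet]
            constructor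
            · apply Finset.insert_subset hv
              intro x hx
              have := hS.1 hx
              rw [hN, Finset.mem_filter, Finset.mem_erase] at this
              exact this.1.2
            · have hadjS : ∀ u ∈ S, adj v u := by
                intro u hu
                have := hS.1 hu
                rw [hN, Finset.mem_filter] at this
                exact this.2
              intro x hx y hy hxy
              rcases Finset.mem_insert.mp hx with hxv | hxS
              · rcases Finset.mem_insert.mp hy with hyv | hyS
                · exact absurd (hxv.trans hyv.symm) hxy
                · subst hxv; exact hadjS y hyS
              · rcases Finset.mem_insert.mp hy with hyv | hyS
                · subst hyv; exact hsym _ _ (hadjS x hxS)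
                · exact hS.2 x hxS y hyS hxy
          have := hfree _ this
          rw [Finset.card_insert_of_notMem hvS] at this
          omega
        have hNn : N.card ≤ n := by
          calc N.card ≤ (V.erase v).card := Finset.card_le_card
                (by rw [hN]; exact Finset.filter_subset _ _)
            _ = n := by
                have : (n + 1) - 1 = n := by omega
                rw [Finset.card_erase_of_mem hv, hcard, this]

        have hNle : (cliqueSet adj N).card ≤ gprod (n - n / (r + 1)) r := by
          calc (cliqueSet adj N).card ≤ gprod N.card r :=
                ih N.card (by omega) r N rfl hNfree
            _ ≤ gprod (n - n / (r + 1)) r := gprod_mono r hNcard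
        have hAfree : ∀ S ∈ cliqueSet adj (V.erase v), S.card ≤ r + 1 := by
          intro S hS
          exact hfree S (cliqueSet_mono adj (Finset.erase_subset _ _) hS)
        have hAcard : (V.erase v).card = n := by
          have : (n + 1) - 1 = n := by omega
          rw [Finset.card_erase_of_mem hv, hcard, this]

        have hAle : (cliqueSet adj (V.erase v)).card ≤ gprod n (r + 1) :=
          ih n (by omega) (r + 1) (V.erase v) hAcard hAfree
        rw [hA] at hsplit
        rw [gprod_succ]
        omega

end Cliques

/-! ### Relating the definitions to Mathlib's `Finset.Shatters` -/

lemma shatters_iff {n : ℕ} (F : Finset (Finset (Fin n))) (I : Finset (Fin n)) :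
    Shatters F I ↔ F.Shatters I := by
  have hsub : F.image (fun A => A ∩ I) ⊆ I.powerset := by
    intro t ht
    rw [Finset.mem_image] at ht
    obtain ⟨A, _, rfl⟩ := ht
    exact Finset.mem_powerset.mpr Finset.inter_subset_right
  constructor
  · intro h t ht
    have heq : F.image (fun A => A ∩ I) = I.powerset := by
      apply Finset.eq_of_subset_of_card_le hsub
      rw [Finset.card_powerset, ← h]
    have ht' : t ∈ F.image (fun A => A ∩ I) := by
      rw [heq]; exact Finset.mem_powerset.mpr ht
    obtain ⟨A, hA, hAt⟩ := Finset.mem_image.mp ht'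
    exact ⟨A, hA, by rw [Finset.inter_comm]; exact hAt⟩
  · intro h
    have hsup : I.powerset ⊆ F.image (fun A => A ∩ I) := by
      intro t ht
      obtain ⟨A, hA, hAI⟩ := h (Finset.mem_powerset.mp ht)
      exact Finset.mem_image.mpr ⟨A, hA, by rw [Finset.inter_comm] at hAI; exact hAI⟩
    have := Finset.eq_of_subset_of_card_le hsup (Finset.card_le_card hsub)
    rw [Shatters, ← this, Finset.card_powerset]

/-! ### The real-valued bound via AM-GM -/

lemma gprod_le_real (n r : ℕ) (hr : 0 < r) : (gprod n r : ℝ) ≤ ((n : ℝ) / r + 1) ^ r := by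
  set z : ℕ → ℝ := fun i => (((n + i) / r + 1 : ℕ) : ℝ) with hz
  have hznn : ∀ i ∈ Finset.range r, (0 : ℝ) ≤ z i := fun i _ => Nat.cast_nonneg _
  have hw : ∀ i ∈ Finset.range r, (0 : ℝ) ≤ 1 / (r : ℝ) := fun i _ => by positivity
  have hrR : (0 : ℝ) < r := by exact_mod_cast hr
  have hw' : ∑ _i ∈ Finset.range r, (1 / (r : ℝ)) = 1 := by
    rw [Finset.sum_const, Finset.card_range, nsmul_eq_mul]
    field_simp
  have amgm := Real.geom_mean_le_arith_mean_weighted (Finset.range r)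
    (fun _ => 1 / (r : ℝ)) z hw hw' hznn
  have hsumz : ∑ i ∈ Finset.range r, z i = ((n + r : ℕ) : ℝ) := by
    rw [hz, ← Nat.cast_sum]
    congr 1
    rw [Finset.sum_add_distrib, sum_div_parts r hr n, Finset.sum_const, Finset.card_range,
      smul_eq_mul, Nat.mul_one]
  have hRHS : ∑ i ∈ Finset.range r, (1 / (r : ℝ)) * z i = (n : ℝ) / r + 1 := by
    rw [← Finset.mul_sum, hsumz]
    push_cast
    field_simp
  rw [hRHS] at amgm
  have h0 : (0 : ℝ) ≤ (n : ℝ) / r + 1 := by positivity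
  have hlhs : (∏ i ∈ Finset.range r, z i ^ (1 / (r : ℝ))) ^ r = ∏ i ∈ Finset.range r, z i := by
    rw [← Finset.prod_pow]
    apply Finset.prod_congr rfl
    intro i hi
    rw [← Real.rpow_natCast (z i ^ (1 / (r : ℝ))) r, ← Real.rpow_mul (hznn i hi)]
    rw [one_div, inv_mul_cancel₀ (by positivity : (r : ℝ) ≠ 0), Real.rpow_one]
  have hprodnn : (0 : ℝ) ≤ ∏ i ∈ Finset.range r, z i ^ (1 / (r : ℝ)) :=
    Finset.prod_nonneg fun i hi => Real.rpow_nonneg (hznn i hi) _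
  have key : ∏ i ∈ Finset.range r, z i ≤ ((n : ℝ) / r + 1) ^ r := by
    rw [← hlhs]
    exact pow_le_pow_left₀ hprodnn amgm r
  have hcast : (gprod n r : ℝ) = ∏ i ∈ Finset.range r, z i := by
    rw [gprod, Nat.cast_prod]
  rw [hcast]
  exact key

/-! ### Main result -/

lemma main_bound {n : ℕ} (r : ℕ) (hr : 1 ≤ r) (F : Finset (Finset (Fin n)))
    (hU : ¬ HasU F (r + 1) 2) : (F.card : ℝ) ≤ ((n : ℝ) / r + 1) ^ r := by
  classical
  set adj : Fin n → Fin n → Prop := fun x y => x ≠ y ∧ Shatters F {x, y} with hadj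
  have hsym : ∀ x y, adj x y → adj y x := by
    rintro x y ⟨h1, h2⟩
    exact ⟨h1.symm, by rwa [Finset.pair_comm]⟩
  have hirr : ∀ x, ¬ adj x x := fun x h => h.1 rfl
  have hfree : ∀ S ∈ cliqueSet adj Finset.univ, S.card ≤ r := by
    intro S hS
    by_contra hgt
    push_neg at hgt
    obtain ⟨S', hsub, hScard⟩ := Finset.exists_subset_card_eq (s := S) (n := r + 1) (by omega)
    apply hU
    refine ⟨S', hScard, by omega, ?_⟩
    intro J hJ hJ2
    obtain ⟨x, y, hxy, rfl⟩ := Finset.card_eq_two.mp hJ2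
    have hx : x ∈ S := hsub (hJ (Finset.mem_insert_self x {y}))
    have hy : y ∈ S := hsub (hJ (Finset.mem_insert_of_mem (Finset.mem_singleton_self y)))
    exact ((mem_cliqueSet adj).mp hS).2 x hx y hy hxy |>.2
  have h1 : F.card ≤ F.shatterer.card := Finset.card_le_card_shatterer F
  have h2 : F.shatterer ⊆ cliqueSet adj Finset.univ := by
    intro S hS
    rw [mem_cliqueSet]
    refine ⟨Finset.subset_univ S, ?_⟩
    intro x hx y hy hxy
    refine ⟨hxy, ?_⟩
    rw [shatters_iff]
    apply (Finset.mem_shatterer.mp hS).mono_right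
    exact Finset.insert_subset hx (Finset.singleton_subset_iff.mpr hy)
  have h3 : (cliqueSet adj Finset.univ).card ≤ gprod n r :=
    cliqueSet_card_le adj hsym hirr n r Finset.univ (by simp) hfree
  have h4 : (gprod n r : ℝ) ≤ ((n : ℝ) / r + 1) ^ r := gprod_le_real n r (by omega)
  have h5 : F.card ≤ gprod n r := le_trans h1 (le_trans (Finset.card_le_card h2) h3)
  calc (F.card : ℝ) ≤ (gprod n r : ℝ) := by exact_mod_cast h5
    _ ≤ ((n : ℝ) / r + 1) ^ r := h4

theorem stmt_2 :
    (∀ (n r : ℕ), 2 ≤ r → r ≤ n →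
      ∀ F : Finset (Finset (Fin n)), ¬ HasU F (r + 1) 2 →
        (F.card : ℝ) ≤ ((n : ℝ) / r + 1) ^ r) ∧
    (∀ (n : ℕ) (F : Finset (Finset (Fin n))) (m : ℕ),
      IsGreatest {m' | ∃ I : Finset (Fin n), DUniversal F 2 I ∧ I.card = m'} m →
      (F.card : ℝ) ≤ ((n : ℝ) / m + 1) ^ m) := by
  constructor
  · intro n r hr _ F hU
    exact main_bound r (by omega) F hU
  · intro n F m hm
    obtain ⟨I, hI, hIcard⟩ := hm.1
    have hm2 : 2 ≤ m := hIcard ▸ hI.1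
    apply main_bound m (by omega) F
    rintro ⟨I', hI'card, hI'⟩
    have : m + 1 ∈ {m' | ∃ I : Finset (Fin n), DUniversal F 2 I ∧ I.card = m'} :=
      ⟨I', hI', hI'card⟩
    have := hm.2 this
    omega
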